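/- If P is a ccc tree forcing, then a subset A of ω^Ω is P-measurable iff there is a Borel set B with A △ B ∈ I_P. -/
import Mathlib


open Set

noncomputable section

/-- The restriction `x↾n` of `x : ℕ → α` to its first `n` values, as a list. -/
def res {α : Type*} (x : ℕ → α) (n : ℕ) : List α := List.ofFn (fun i : Fin n => x i)

/-- A (set-theoretic) tree on `α`: a collection of finite sequences closed under
initial segments. -/
def IsTree {α : Type*} (T : Set (List α)) : Prop :=
  ∀ s ∈ T, ∀ t : List α, t <+: s → t ∈ T

/-- The set `[T]` of branches of a tree `T`. -/
def branches {α : Type*} (T : Set (List α)) : Set (ℕ → α) :=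
  {x | ∀ n : ℕ, res x n ∈ T}

/-- A perfect tree: a nonempty tree with a splitting node above every node. -/
def IsPerfectTree {α : Type*} (T : Set (List α)) : Prop :=
  IsTree T ∧ T.Nonempty ∧
    ∀ s ∈ T, ∃ t ∈ T, s <+: t ∧ ∃ a b : α, a ≠ b ∧ t ++ [a] ∈ T ∧ t ++ [b] ∈ T

/-- A tree forcing: a collection of perfect trees containing the full tree and closed
under restriction `T ↦ T_u`. -/
def IsTreeForcing {α : Type*} (P : Set (Set (List α))) : Prop :=
  (∀ T ∈ P, IsPerfectTree T) ∧ Set.univ ∈ P ∧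
    ∀ T ∈ P, ∀ u ∈ T, {t ∈ T | u <+: t ∨ t <+: u} ∈ P

/-- `A` is `P`-nowhere dense. -/
def PNwd {α : Type*} (P : Set (Set (List α))) (A : Set (ℕ → α)) : Prop :=
  ∀ T ∈ P, ∃ S ∈ P, S ⊆ T ∧ branches S ∩ A = ∅

/-- `A` belongs to the σ-ideal `I_P` generated by the `P`-nowhere dense sets. -/
def PIdeal {α : Type*} (P : Set (Set (List α))) (A : Set (ℕ → α)) : Prop :=
  ∃ f : ℕ → Set (ℕ → α), (∀ n, PNwd P (f n)) ∧ A ⊆ ⋃ n, f n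

/-- `A` belongs to the auxiliary ideal `I*_P`. -/
def PIstar {α : Type*} (P : Set (Set (List α))) (A : Set (ℕ → α)) : Prop :=
  ∀ T ∈ P, ∃ S ∈ P, S ⊆ T ∧ PIdeal P (branches S ∩ A)

/-- `A` is `P`-measurable. -/
def PMeasurable {α : Type*} (P : Set (Set (List α))) (A : Set (ℕ → α)) : Prop :=
  ∀ T ∈ P, ∃ S ∈ P, S ⊆ T ∧ (PIdeal P (branches S \ A) ∨ PIdeal P (branches S ∩ A))

/-- Compatibility of two conditions in the tree forcing `P`. -/
def Compat {α : Type*} (P : Set (Set (List α))) (S T : Set (List α)) : Prop :=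
  ∃ R ∈ P, R ⊆ S ∧ R ⊆ T

/-- `D` is an antichain in the tree forcing `P`. -/
def IsAntichainIn {α : Type*} (P D : Set (Set (List α))) : Prop :=
  D ⊆ P ∧ ∀ S ∈ D, ∀ T ∈ D, S ≠ T → ¬ Compat P S T

/-- `D` is a maximal antichain in the tree forcing `P`. -/
def IsMaxAntichainIn {α : Type*} (P D : Set (Set (List α))) : Prop :=
  IsAntichainIn P D ∧ ∀ T ∈ P, ∃ S ∈ D, Compat P S T

/-- `s` is the stem of the tree `T`: the longest node comparable with all nodes of `T`. -/
def IsStem {α : Type*} (T : Set (List α)) (s : List α) : Prop :=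
  s ∈ T ∧ (∀ t ∈ T, s <+: t ∨ t <+: s) ∧
    ∀ s' ∈ T, (∀ t ∈ T, s' <+: t ∨ t <+: s') → s'.length ≤ s.length

section Helpers

-- ### auxiliary lemmas

lemma res_length (x : ℕ → ℕ) (n : ℕ) : (res x n).length = n := by simp [res]

lemma res_getD (x : ℕ → ℕ) {n i : ℕ} (h : i < n) : (res x n).getD i 0 = x i := by
  simp [res, List.getD_eq_getElem?_getD, List.getElem?_ofFn, h]

lemma res_eq_iff (x : ℕ → ℕ) {n : ℕ} {u : List ℕ} (h : u.length = n) :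
    res x n = u ↔ ∀ i < n, x i = u.getD i 0 := by
  constructor
  · rintro rfl i hi; rw [res_getD x hi]
  · intro hx
    apply List.ext_getElem (by rw [res_length, h])
    intro i h1 h2
    have h1' : i < n := by rwa [res_length] at h1
    have := (hx i h1').symm
    rw [List.getD_eq_getElem u 0 h2] at this
    rw [this]
    simp [res]

lemma branches_mono {S T : Set (List ℕ)} (h : S ⊆ T) : branches S ⊆ branches T :=
  fun _ hx n => h (hx n)

lemma restrict_branch_res {R : Set (List ℕ)} {u : List ℕ} {x : ℕ → ℕ}
    (hx : x ∈ branches {t ∈ R | u <+: t ∨ t <+: u}) : res x u.length = u := by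
  rcases (hx u.length).2 with h | h
  · exact (h.eq_of_length (res_length x u.length).symm).symm
  · exact h.eq_of_length (res_length x u.length)

lemma exists_long_node {T : Set (List ℕ)} (h : IsPerfectTree T) (m : ℕ) :
    ∃ v ∈ T, m ≤ v.length := by
  induction m with
  | zero => obtain ⟨s, hs⟩ := h.2.1; exact ⟨s, hs, Nat.zero_le _⟩
  | succ k ih =>
    obtain ⟨v, hv, hlen⟩ := ih
    obtain ⟨t, ht, hpre, a, b, _, ha, _⟩ := h.2.2 v hv
    refine ⟨t ++ [a], ha, ?_⟩
    have := hpre.length_le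
    simp only [List.length_append, List.length_singleton]
    omega

-- ### ideal lemmas
variable {P : Set (Set (List ℕ))}

lemma pideal_mono {A B : Set (ℕ → ℕ)} (h : PIdeal P A) (hBA : B ⊆ A) : PIdeal P B := by
  obtain ⟨f, h1, h2⟩ := h; exact ⟨f, h1, hBA.trans h2⟩

lemma pideal_empty : PIdeal P (∅ : Set (ℕ → ℕ)) :=
  ⟨fun _ => ∅, fun _ T hT => ⟨T, hT, subset_rfl, inter_empty _⟩, by simp⟩

lemma pideal_of_pnwd {A : Set (ℕ → ℕ)} (h : PNwd P A) : PIdeal P A :=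
  ⟨fun _ => A, fun _ => h, subset_iUnion (fun _ => A) 0⟩

lemma pideal_iUnion (g : ℕ → Set (ℕ → ℕ)) (h : ∀ n, PIdeal P (g n)) :
    PIdeal P (⋃ n, g n) := by
  choose f hf1 hf2 using h
  refine ⟨fun k => f k.unpair.1 k.unpair.2, fun k => hf1 _ _, ?_⟩
  intro x hx
  obtain ⟨n, hn⟩ := mem_iUnion.mp hx
  obtain ⟨m, hm⟩ := mem_iUnion.mp (hf2 n hn)
  exact mem_iUnion.mpr ⟨Nat.pair n m, by simpa [Nat.unpair_pair] using hm⟩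

lemma pideal_union {A B : Set (ℕ → ℕ)} (hA : PIdeal P A) (hB : PIdeal P B) :
    PIdeal P (A ∪ B) := by
  classical
  have := pideal_iUnion (P := P) (fun n => if n = 0 then A else B)
    (fun n => by by_cases h : n = 0 <;> simp [h] <;> assumption)
  refine pideal_mono this ?_
  rintro x (h | h)
  · exact mem_iUnion.mpr ⟨0, by simpa using h⟩
  · exact mem_iUnion.mpr ⟨1, by simpa using h⟩

-- ### antichains

lemma compat_self {S : Set (List ℕ)} (hS : S ∈ P) : Compat P S S :=
  ⟨S, hS, subset_rfl, subset_rfl⟩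

lemma compat_comm {S T : Set (List ℕ)} (h : Compat P S T) : Compat P T S := by
  obtain ⟨R, hR, h1, h2⟩ := h; exact ⟨R, hR, h2, h1⟩

lemma exists_antichain (Q : Set (Set (List ℕ))) (hQ : Q ⊆ P) :
    ∃ D ⊆ Q, (∀ S ∈ D, ∀ T ∈ D, S ≠ T → ¬ Compat P S T) ∧
      ∀ R ∈ Q, ∃ S ∈ D, Compat P R S := by
  classical
  set 𝒜 : Set (Set (Set (List ℕ))) :=
    {D | D ⊆ Q ∧ ∀ S ∈ D, ∀ T ∈ D, S ≠ T → ¬ Compat P S T} with h𝒜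
  obtain ⟨D, hD⟩ := zorn_subset 𝒜 (by
    intro c hc hchain
    refine ⟨⋃₀ c, ⟨sUnion_subset fun d hd => (hc hd).1, ?_⟩,
      fun s hs => subset_sUnion_of_mem hs⟩
    rintro S ⟨d₁, hd₁, hS⟩ T ⟨d₂, hd₂, hT⟩ hne
    rcases hchain.total hd₁ hd₂ with h | h
    · exact (hc hd₂).2 S (h hS) T hT hne
    · exact (hc hd₁).2 S hS T (h hT) hne)
  refine ⟨D, hD.1.1, hD.1.2, ?_⟩
  intro R hR
  by_cases hRD : R ∈ D
  · exact ⟨R, hRD, compat_self (hQ hR)⟩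
  by_contra hcon
  push_neg at hcon
  have hmem : insert R D ∈ 𝒜 := by
    refine ⟨insert_subset hR hD.1.1, ?_⟩
    rintro S (rfl | hS) T (rfl | hT) hne
    · exact absurd rfl hne
    · exact fun h => hcon T hT h
    · exact fun h => hcon S hS (compat_comm h)
    · exact hD.1.2 S hS T hT hne
  exact hRD (hD.2 hmem (subset_insert R D) (mem_insert R D))
-- ### the key covering lemma (relativized ccc argument)

lemma key_lemma (hP : IsTreeForcing P)
    (hccc : ∀ D : Set (Set (List ℕ)), IsAntichainIn P D → D.Countable)
    {T : Set (List ℕ)} (hT : T ∈ P) (A : Set (ℕ → ℕ))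
    (hdense : ∀ S ∈ P, S ⊆ T → ∃ S' ∈ P, S' ⊆ S ∧ PIdeal P (branches S' ∩ A)) :
    PIdeal P (branches T ∩ A) := by
  classical
  set Q : Set (Set (List ℕ)) :=
    {S | S ∈ P ∧ S ⊆ T ∧ PIdeal P (branches S ∩ A)} with hQdef
  obtain ⟨D, hDQ, hanti, hpre⟩ := exists_antichain (P := P) Q (fun S hS => hS.1)
  have hDc : D.Countable := hccc D ⟨fun S hS => (hDQ hS).1, hanti⟩
  have hne : D.Nonempty := by
    obtain ⟨S', hS', hsub, hid⟩ := hdense T hT subset_rfl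
    obtain ⟨S, hS, -⟩ := hpre S' ⟨hS', hsub, hid⟩
    exact ⟨S, hS⟩
  obtain ⟨f, hf⟩ := hDc.exists_eq_range hne
  have hmem : ∀ n, f n ∈ Q := fun n => hDQ (hf ▸ mem_range_self n)
  have hNwd : PNwd P (branches T \ ⋃ n, branches (f n)) := by
    intro R hR
    by_cases hcase : ∀ u ∈ R, (branches {t ∈ R | u <+: t ∨ t <+: u} ∩ branches T).Nonempty
    · have hRT : R ⊆ T := by
        intro u hu
        obtain ⟨x, hx1, hx2⟩ := hcase u hu
        have hres := restrict_branch_res hx1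
        rw [← hres]; exact hx2 u.length
      obtain ⟨S', hS', hsub', hid'⟩ := hdense R hR hRT
      obtain ⟨S, hSD, R₀, hR₀, hR₀S, hR₀S'⟩ := hpre S' ⟨hS', hsub'.trans hRT, hid'⟩
      refine ⟨R₀, hR₀, hR₀S.trans hsub', ?_⟩
      obtain ⟨n, hn⟩ : ∃ n, f n = S := by
        have := hSD; rw [hf] at this; exact this
      apply eq_empty_iff_forall_notMem.mpr
      rintro x ⟨hx1, hx2⟩
      exact hx2.2 (mem_iUnion.mpr ⟨n, hn ▸ branches_mono hR₀S' hx1⟩)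
    · push_neg at hcase
      obtain ⟨u, hu, hempty⟩ := hcase
      refine ⟨{t ∈ R | u <+: t ∨ t <+: u}, hP.2.2 R hR u hu, fun t ht => ht.1, ?_⟩
      apply eq_empty_iff_forall_notMem.mpr
      rintro x ⟨hx1, hx2⟩
      exact eq_empty_iff_forall_notMem.mp hempty x ⟨hx1, hx2.1⟩
  have hcover : branches T ∩ A ⊆
      (⋃ n, branches (f n) ∩ A) ∪ (branches T \ ⋃ n, branches (f n)) := by
    rintro x ⟨hxT, hxA⟩
    by_cases hx : x ∈ ⋃ n, branches (f n)
    · obtain ⟨n, hn⟩ := mem_iUnion.mp hx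
      exact Or.inl (mem_iUnion.mpr ⟨n, hn, hxA⟩)
    · exact Or.inr ⟨hxT, hx⟩
  exact pideal_mono
    (pideal_union (pideal_iUnion _ fun n => (hmem n).2.2) (pideal_of_pnwd hNwd)) hcover

-- ### P-measurable sets form a σ-algebra

lemma pmeas_empty (_hP : IsTreeForcing P) : PMeasurable P (∅ : Set (ℕ → ℕ)) := by
  intro T hT
  exact ⟨T, hT, subset_rfl, Or.inr (by rw [inter_empty]; exact pideal_empty)⟩

lemma pmeas_compl {A : Set (ℕ → ℕ)} (h : PMeasurable P A) : PMeasurable P Aᶜ := by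
  intro T hT
  obtain ⟨S, hS, hsub, hor⟩ := h T hT
  refine ⟨S, hS, hsub, ?_⟩
  rcases hor with h1 | h1
  · right; rwa [← diff_eq]
  · left; rwa [diff_compl]

lemma pmeas_iUnion (hP : IsTreeForcing P)
    (hccc : ∀ D : Set (Set (List ℕ)), IsAntichainIn P D → D.Countable)
    (g : ℕ → Set (ℕ → ℕ)) (h : ∀ n, PMeasurable P (g n)) :
    PMeasurable P (⋃ n, g n) := by
  intro T hT
  by_cases hcase : ∃ n, ∃ S ∈ P, S ⊆ T ∧ PIdeal P (branches S \ g n)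
  · obtain ⟨n, S, hS, hsub, hid⟩ := hcase
    refine ⟨S, hS, hsub, Or.inl (pideal_mono hid ?_)⟩
    intro x hx
    exact ⟨hx.1, fun h2 => hx.2 (mem_iUnion.mpr ⟨n, h2⟩)⟩
  · push_neg at hcase
    refine ⟨T, hT, subset_rfl, Or.inr ?_⟩
    have hn : ∀ n, PIdeal P (branches T ∩ g n) := by
      intro n
      refine key_lemma hP hccc hT (g n) ?_
      intro S hS hsub
      obtain ⟨S', hS', hsub', hor⟩ := h n S hS
      rcases hor with hl | hr
      · exact absurd hl (hcase n S' hS' (hsub'.trans hsub))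
      · exact ⟨S', hS', hsub', hr⟩
    refine pideal_mono (pideal_iUnion _ hn) ?_
    rintro x ⟨hxT, hxU⟩
    obtain ⟨n, hn'⟩ := mem_iUnion.mp hxU
    exact mem_iUnion.mpr ⟨n, hxT, hn'⟩

-- ### cylinders are P-measurable, hence all Borel sets are

lemma pmeas_cylinder (hP : IsTreeForcing P) (i : ℕ) (s : Set ℕ) :
    PMeasurable P ((fun x : ℕ → ℕ => x i) ⁻¹' s) := by
  intro T hT
  obtain ⟨v, hv, hlen⟩ := exists_long_node (hP.1 T hT) (i + 1)
  have hvlen : i < v.length := hlen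
  set S := {t ∈ T | v <+: t ∨ t <+: v} with hSdef
  have hSP : S ∈ P := hP.2.2 T hT v hv
  have hST : S ⊆ T := fun t ht => ht.1
  have hres : ∀ x ∈ branches S, x i = v.getD i 0 := by
    intro x hx
    have h2 : res x v.length = v := restrict_branch_res hx
    rw [← h2]
    exact (res_getD x hvlen).symm
  by_cases hmem : v.getD i 0 ∈ s
  · refine ⟨S, hSP, hST, Or.inl ?_⟩
    have he : branches S \ (fun x : ℕ → ℕ => x i) ⁻¹' s = ∅ := by
      apply eq_empty_iff_forall_notMem.mpr
      rintro x ⟨hx1, hx2⟩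
      exact hx2 (by rw [mem_preimage, hres x hx1]; exact hmem)
    rw [he]; exact pideal_empty
  · refine ⟨S, hSP, hST, Or.inr ?_⟩
    have he : branches S ∩ (fun x : ℕ → ℕ => x i) ⁻¹' s = ∅ := by
      apply eq_empty_iff_forall_notMem.mpr
      rintro x ⟨hx1, hx2⟩
      exact hmem (by rw [← hres x hx1]; exact hx2)
    rw [he]; exact pideal_empty

lemma borel_pmeas (hP : IsTreeForcing P)
    (hccc : ∀ D : Set (Set (List ℕ)), IsAntichainIn P D → D.Countable)
    {B : Set (ℕ → ℕ)} (hB : MeasurableSet B) : PMeasurable P B := by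
  let M : MeasurableSpace (ℕ → ℕ) :=
    { MeasurableSet' := PMeasurable P
      measurableSet_empty := pmeas_empty hP
      measurableSet_compl := fun _ h => pmeas_compl h
      measurableSet_iUnion := fun g h => pmeas_iUnion hP hccc g h }
  have hle : (MeasurableSpace.pi : MeasurableSpace (ℕ → ℕ)) ≤ M := by
    have he : (MeasurableSpace.pi : MeasurableSpace (ℕ → ℕ)) =
        ⨆ i : ℕ, MeasurableSpace.comap (fun x : ℕ → ℕ => x i) ⊤ := rfl
    rw [he]
    refine iSup_le fun i => ?_
    rw [MeasurableSpace.comap_le_iff_le_map]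
    intro s _
    exact pmeas_cylinder hP i s
  exact hle B hB

-- ### branch sets are Borel

lemma measurableSet_res_eq (n : ℕ) (u : List ℕ) :
    MeasurableSet {x : ℕ → ℕ | res x n = u} := by
  classical
  by_cases h : u.length = n
  · have he : {x : ℕ → ℕ | res x n = u} =
        ⋂ i : ℕ, if i < n then (fun x : ℕ → ℕ => x i) ⁻¹' {u.getD i 0} else univ := by
      ext x
      simp only [mem_setOf_eq, mem_iInter, res_eq_iff x h]
      constructor
      · intro hx i
        by_cases hi : i < n
        · rw [if_pos hi]; exact hx i hi
        · rw [if_neg hi]; exact mem_univ x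
      · intro hx i hi
        have := hx i
        rwa [if_pos hi] at this
    rw [he]
    refine MeasurableSet.iInter fun i => ?_
    by_cases hi : i < n
    · rw [if_pos hi]
      exact measurable_pi_apply i (MeasurableSet.singleton _)
    · rw [if_neg hi]
      exact MeasurableSet.univ
  · have he : {x : ℕ → ℕ | res x n = u} = ∅ := by
      apply eq_empty_iff_forall_notMem.mpr
      intro x hx
      exact h (by rw [← hx, res_length])
    rw [he]; exact MeasurableSet.empty

lemma measurableSet_branches (S : Set (List ℕ)) : MeasurableSet (branches S) := by
  have he : branches S = ⋂ n : ℕ, ⋃ u : S, {x : ℕ → ℕ | res x n = u.1} := by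
    ext x
    simp only [branches, mem_setOf_eq, mem_iInter, mem_iUnion]
    constructor
    · intro hx n; exact ⟨⟨res x n, hx n⟩, rfl⟩
    · intro hx n
      obtain ⟨u, hu⟩ := hx n
      exact hu ▸ u.2
  rw [he]
  exact MeasurableSet.iInter fun n => MeasurableSet.iUnion fun u => measurableSet_res_eq n u.1

end Helpers

/-- If `P` is a ccc tree forcing (on Baire space), then a set `A` is `P`-measurable
if and only if there is a Borel set `B` with `A △ B ∈ I_P`. -/
theorem stmt10 (P : Set (Set (List ℕ))) (hP : IsTreeForcing P)
    (hccc : ∀ D : Set (Set (List ℕ)), IsAntichainIn P D → D.Countable)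
    (A : Set (ℕ → ℕ)) :
    PMeasurable P A ↔
      ∃ B : Set (ℕ → ℕ), MeasurableSet B ∧ PIdeal P (symmDiff A B) := by
  classical
  constructor
  · intro hA
    set Q : Set (Set (List ℕ)) :=
      {S | S ∈ P ∧ (PIdeal P (branches S \ A) ∨ PIdeal P (branches S ∩ A))} with hQdef
    obtain ⟨D, hDQ, hanti, hpre⟩ := exists_antichain (P := P) Q (fun S hS => hS.1)
    have hcomp : ∀ T ∈ P, ∃ S ∈ D, Compat P S T := by
      intro T hT
      obtain ⟨S', hS', hsub, hor⟩ := hA T hT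
      obtain ⟨S, hS, R₀, hR₀, h1, h2⟩ := hpre S' ⟨hS', hor⟩
      exact ⟨S, hS, R₀, hR₀, h2, h1.trans hsub⟩
    have hDc : D.Countable := hccc D ⟨fun S hS => (hDQ hS).1, hanti⟩
    have hne : D.Nonempty := by
      obtain ⟨S, hS, -⟩ := hcomp univ hP.2.1
      exact ⟨S, hS⟩
    obtain ⟨f, hf⟩ := hDc.exists_eq_range hne
    have hmemQ : ∀ n, f n ∈ Q := fun n => hDQ (hf ▸ mem_range_self n)
    set B : Set (ℕ → ℕ) :=
      ⋃ n, if PIdeal P (branches (f n) \ A) then branches (f n) else ∅ with hBdef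
    have hBmeas : MeasurableSet B := by
      refine MeasurableSet.iUnion fun n => ?_
      by_cases h : PIdeal P (branches (f n) \ A)
      · rw [if_pos h]; exact measurableSet_branches _
      · rw [if_neg h]; exact MeasurableSet.empty
    refine ⟨B, hBmeas, ?_⟩
    have hBA : PIdeal P (B \ A) := by
      have h1 : ∀ n, PIdeal P
          ((if PIdeal P (branches (f n) \ A) then branches (f n) else ∅) \ A) := by
        intro n
        by_cases h : PIdeal P (branches (f n) \ A)
        · rwa [if_pos h]
        · rw [if_neg h, empty_diff]; exact pideal_empty
      refine pideal_mono (pideal_iUnion _ h1) ?_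
      rintro x ⟨hx1, hx2⟩
      obtain ⟨n, hn⟩ := mem_iUnion.mp hx1
      exact mem_iUnion.mpr ⟨n, hn, hx2⟩
    have hN : PNwd P (⋃ n, branches (f n))ᶜ := by
      intro R hR
      obtain ⟨S, hSD, R₀, hR₀, h1, h2⟩ := hcomp R hR
      obtain ⟨n, hn⟩ : ∃ n, f n = S := by rw [hf] at hSD; exact hSD
      refine ⟨R₀, hR₀, h2, ?_⟩
      apply eq_empty_iff_forall_notMem.mpr
      rintro x ⟨hx1, hx2⟩
      exact hx2 (mem_iUnion.mpr ⟨n, hn ▸ branches_mono h1 hx1⟩)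
    have hAB : PIdeal P (A \ B) := by
      have h1 : ∀ n, PIdeal P (if PIdeal P (branches (f n) \ A) then (∅ : Set (ℕ → ℕ))
          else branches (f n) ∩ A) := by
        intro n
        by_cases h : PIdeal P (branches (f n) \ A)
        · rw [if_pos h]; exact pideal_empty
        · rw [if_neg h]
          rcases (hmemQ n).2 with h' | h'
          · exact absurd h' h
          · exact h'
      refine pideal_mono (pideal_union (pideal_iUnion _ h1) (pideal_of_pnwd hN)) ?_
      rintro x ⟨hx1, hx2⟩
      by_cases hx : x ∈ ⋃ n, branches (f n)
      · obtain ⟨n, hn⟩ := mem_iUnion.mp hx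
        left
        refine mem_iUnion.mpr ⟨n, ?_⟩
        by_cases h : PIdeal P (branches (f n) \ A)
        · exact absurd (mem_iUnion.mpr ⟨n, by rw [if_pos h]; exact hn⟩ : x ∈ B) hx2
        · rw [if_neg h]; exact ⟨hn, hx1⟩
      · exact Or.inr hx
    rw [symmDiff_def]
    exact pideal_union hAB hBA
  · rintro ⟨B, hB, hABI⟩
    have hBP : PMeasurable P B := borel_pmeas hP hccc hB
    intro T hT
    obtain ⟨S, hS, hsub, hor⟩ := hBP T hT
    refine ⟨S, hS, hsub, ?_⟩
    have hsd : A \ B ⊆ symmDiff A B := by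
      rw [symmDiff_def]; exact subset_union_left
    have hsd' : B \ A ⊆ symmDiff A B := by
      rw [symmDiff_def]; exact subset_union_right
    rcases hor with h | h
    · left
      refine pideal_mono (pideal_union h hABI) ?_
      rintro x ⟨hx1, hx2⟩
      by_cases hxB : x ∈ B
      · exact Or.inr (hsd' ⟨hxB, hx2⟩)
      · exact Or.inl ⟨hx1, hxB⟩
    · right
      refine pideal_mono (pideal_union h hABI) ?_
      rintro x ⟨hx1, hx2⟩
      by_cases hxB : x ∈ B
      · exact Or.inl ⟨hx1, hxB⟩
      · exact Or.inr (hsd ⟨hx2, hxB⟩)
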